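/- Under the p = 2 inexact adaptive regularization framework described in the context, there exists a constant C > 0 such that for every k ≥ 0: min_{1 ≤ j ≤ k+1} ‖∇f(x_j)‖ ≤ C · (k+1)^{−2/3}. -/

import Mathlib

open scoped InnerProductSpace

section Aux

variable {E : Type*} [NormedAddCommGroup E] [InnerProductSpace ℝ E] [CompleteSpace E]

lemma my_grad_hasFDerivAt {f : E → ℝ} (hf : ContDiff ℝ (2:ℕ∞) f)
    {H : E → E →L[ℝ] E}
    (hH : ∀ x u v, ⟪H x u, v⟫_ℝ = iteratedFDeriv ℝ 2 f x ![u, v]) (y : E) :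
    HasFDerivAt (gradient f) (H y) y := by
  have h1 : ContDiff ℝ (1:ℕ∞) (fderiv ℝ f) := hf.fderiv_right (by norm_num)
  have hdf2 : DifferentiableAt ℝ (fderiv ℝ f) y := (h1.differentiable (by norm_num)) y
  set J : (E →L[ℝ] ℝ) →L[ℝ] E :=
    ((InnerProductSpace.toDual ℝ E).symm.toContinuousLinearEquiv :
      (E →L[ℝ] ℝ) ≃L[ℝ] E).toContinuousLinearMap with hJ
  have hcomp : HasFDerivAt (fun z => J (fderiv ℝ f z))
      (J.comp (fderiv ℝ (fderiv ℝ f) y)) y :=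
    J.hasFDerivAt.comp y hdf2.hasFDerivAt
  have heq : (fun z => J (fderiv ℝ f z)) = gradient f := by
    funext z
    simp [hJ, gradient]
  have heq2 : J.comp (fderiv ℝ (fderiv ℝ f) y) = H y := by
    ext u
    apply ext_inner_right ℝ
    intro v
    have h3 := hH y u v
    rw [iteratedFDeriv_two_apply] at h3
    simp only [Matrix.cons_val_zero, Matrix.cons_val_one, Matrix.head_cons] at h3
    rw [h3]
    simp [hJ, InnerProductSpace.toDual_symm_apply]
  rw [heq, heq2] at hcomp
  exact hcomp

lemma my_inner_gradient_eq {f : E → ℝ} (x v : E) :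
    ⟪gradient f x, v⟫_ℝ = fderiv ℝ f x v := by
  rw [gradient, InnerProductSpace.toDual_symm_apply]

lemma my_grad_taylor {f : E → ℝ}
    {H : E → E →L[ℝ] E}
    (hgrad : ∀ y, HasFDerivAt (gradient f) (H y) y)
    {L : ℝ} (hLip : ∀ x y, ‖H x - H y‖ ≤ L * ‖x - y‖) (x s : E) :
    ‖gradient f (x + s) - gradient f x - H x s‖ ≤ L / 2 * ‖s‖ ^ 2 := by
  set F : ℝ → E := fun t => gradient f (x + t • s) - t • (H x s) - gradient f x with hF
  have hline : ∀ t : ℝ, HasDerivAt (fun t : ℝ => x + t • s) s t := by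
    intro t
    simpa using ((hasDerivAt_id t).smul_const s).const_add x
  have hFd : ∀ t : ℝ, HasDerivAt F (H (x + t • s) s - H x s) t := by
    intro t
    have h1 : HasDerivAt (fun t : ℝ => gradient f (x + t • s)) (H (x + t • s) s) t := by
      exact (hgrad (x + t • s)).comp_hasDerivAt t (hline t)
    have h2 : HasDerivAt (fun t : ℝ => t • (H x s)) (H x s) t := by
      simpa using (hasDerivAt_id t).smul_const (H x s)
    exact (h1.sub h2).sub_const _
  have hcont : ContinuousOn F (Set.Icc (0:ℝ) 1) :=
    fun t _ => ((hFd t).continuousAt).continuousWithinAt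
  have hderiv : ∀ t ∈ Set.Ico (0:ℝ) 1,
      HasDerivWithinAt F (H (x + t • s) s - H x s) (Set.Ici t) t :=
    fun t _ => (hFd t).hasDerivWithinAt
  have ha : ‖F 0‖ ≤ L * ‖s‖ ^ 2 * 0 ^ 2 / 2 := by simp [hF]
  have hB : ∀ t : ℝ, HasDerivAt (fun t : ℝ => L * ‖s‖ ^ 2 * t ^ 2 / 2) (L * ‖s‖ ^ 2 * t) t := by
    intro t
    have := ((hasDerivAt_pow 2 t).const_mul (L * ‖s‖ ^ 2)).div_const 2
    refine this.congr_deriv ?_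
    push_cast
    ring
  have hbound : ∀ t ∈ Set.Ico (0:ℝ) 1, ‖H (x + t • s) s - H x s‖ ≤ L * ‖s‖ ^ 2 * t := by
    intro t ht
    have h1 : ‖(H (x + t • s) - H x) s‖ ≤ ‖H (x + t • s) - H x‖ * ‖s‖ :=
      ContinuousLinearMap.le_opNorm _ _
    have h2 : ‖H (x + t • s) - H x‖ ≤ L * (t * ‖s‖) := by
      have := hLip (x + t • s) x
      simpa [norm_smul, abs_of_nonneg ht.1] using this
    have h3 : ‖(H (x + t • s) - H x) s‖ ≤ L * (t * ‖s‖) * ‖s‖ :=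
      h1.trans (by nlinarith [norm_nonneg s, norm_nonneg (H (x + t • s) - H x)])
    calc ‖H (x + t • s) s - H x s‖ = ‖(H (x + t • s) - H x) s‖ := by
          simp [ContinuousLinearMap.sub_apply]
      _ ≤ L * (t * ‖s‖) * ‖s‖ := h3
      _ = L * ‖s‖ ^ 2 * t := by ring
  have h1 := image_norm_le_of_norm_deriv_right_le_deriv_boundary
    hcont hderiv ha hB hbound (Set.right_mem_Icc.mpr (by norm_num))
  have e : gradient f (x + s) - gradient f x - H x s = F 1 := by
    simp only [hF, one_smul]
    abel
  rw [e]
  calc ‖F 1‖ ≤ L * ‖s‖ ^ 2 * 1 ^ 2 / 2 := h1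
    _ = L / 2 * ‖s‖ ^ 2 := by ring

lemma my_fun_taylor {f : E → ℝ} (hf : ContDiff ℝ (2:ℕ∞) f)
    {H : E → E →L[ℝ] E}
    (hgrad : ∀ y, HasFDerivAt (gradient f) (H y) y)
    {L : ℝ} (hLip : ∀ x y, ‖H x - H y‖ ≤ L * ‖x - y‖) (x s : E) :
    f (x + s) ≤ f x + ⟪gradient f x, s⟫_ℝ + 1 / 2 * ⟪H x s, s⟫_ℝ + L / 6 * ‖s‖ ^ 3 := by
  have hdf : Differentiable ℝ f := hf.differentiable (by norm_num)
  set φ : ℝ → ℝ := fun t => f (x + t • s) - t * ⟪gradient f x, s⟫_ℝ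
      - t ^ 2 / 2 * ⟪H x s, s⟫_ℝ - f x with hφ
  have hline : ∀ t : ℝ, HasDerivAt (fun t : ℝ => x + t • s) s t := by
    intro t
    simpa using ((hasDerivAt_id t).smul_const s).const_add x
  have hφd : ∀ t : ℝ, HasDerivAt φ
      (⟪gradient f (x + t • s) - gradient f x - t • (H x s), s⟫_ℝ) t := by
    intro t
    have h1 : HasDerivAt (fun t : ℝ => f (x + t • s)) (⟪gradient f (x + t • s), s⟫_ℝ) t := by
      have := ((hdf (x + t • s)).hasFDerivAt).comp_hasDerivAt t (hline t)
      rw [my_inner_gradient_eq]; exact this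
    have h2 : HasDerivAt (fun t : ℝ => t * ⟪gradient f x, s⟫_ℝ) (⟪gradient f x, s⟫_ℝ) t := by
      simpa using (hasDerivAt_id t).mul_const (⟪gradient f x, s⟫_ℝ)
    have h3 : HasDerivAt (fun t : ℝ => t ^ 2 / 2 * ⟪H x s, s⟫_ℝ) (t * ⟪H x s, s⟫_ℝ) t := by
      have := ((hasDerivAt_pow 2 t).div_const 2).mul_const (⟪H x s, s⟫_ℝ)
      refine this.congr_deriv ?_
      push_cast
      ring
    have h4 := ((h1.sub h2).sub h3).sub_const (f x)
    refine h4.congr_deriv ?_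
    simp only [inner_sub_left, real_inner_smul_left]
  have hcont : ContinuousOn φ (Set.Icc (0:ℝ) 1) :=
    fun t _ => ((hφd t).continuousAt).continuousWithinAt
  have hderiv : ∀ t ∈ Set.Ico (0:ℝ) 1, HasDerivWithinAt φ
      (⟪gradient f (x + t • s) - gradient f x - t • (H x s), s⟫_ℝ) (Set.Ici t) t :=
    fun t _ => (hφd t).hasDerivWithinAt
  have ha : ‖φ 0‖ ≤ L * ‖s‖ ^ 3 * 0 ^ 3 / 6 := by simp [hφ]
  have hB : ∀ t : ℝ, HasDerivAt (fun t : ℝ => L * ‖s‖ ^ 3 * t ^ 3 / 6)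
      (L * ‖s‖ ^ 3 * t ^ 2 / 2) t := by
    intro t
    have := ((hasDerivAt_pow 3 t).const_mul (L * ‖s‖ ^ 3)).div_const 6
    refine this.congr_deriv ?_
    push_cast
    ring
  have hbound : ∀ t ∈ Set.Ico (0:ℝ) 1,
      ‖⟪gradient f (x + t • s) - gradient f x - t • (H x s), s⟫_ℝ‖
        ≤ L * ‖s‖ ^ 3 * t ^ 2 / 2 := by
    intro t ht
    have hBnd : ‖gradient f (x + t • s) - gradient f x - t • (H x s)‖
        ≤ L / 2 * (t ^ 2 * ‖s‖ ^ 2) := by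
      have h5 := my_grad_taylor hgrad hLip x (t • s)
      have hsm : t • (H x s) = H x (t • s) := (map_smul _ _ _).symm
      rw [hsm]
      calc ‖gradient f (x + t • s) - gradient f x - H x (t • s)‖
          ≤ L / 2 * ‖t • s‖ ^ 2 := h5
        _ = L / 2 * (t ^ 2 * ‖s‖ ^ 2) := by
            rw [norm_smul, Real.norm_eq_abs, mul_pow, sq_abs]
    calc ‖⟪gradient f (x + t • s) - gradient f x - t • (H x s), s⟫_ℝ‖
        ≤ ‖gradient f (x + t • s) - gradient f x - t • (H x s)‖ * ‖s‖ :=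
          norm_inner_le_norm _ _
      _ ≤ L / 2 * (t ^ 2 * ‖s‖ ^ 2) * ‖s‖ :=
          mul_le_mul_of_nonneg_right hBnd (norm_nonneg s)
      _ = L * ‖s‖ ^ 3 * t ^ 2 / 2 := by ring
  have h1 := image_norm_le_of_norm_deriv_right_le_deriv_boundary
    hcont hderiv ha hB hbound (Set.right_mem_Icc.mpr (by norm_num))
  have h2 : φ 1 ≤ |φ 1| := le_abs_self _
  rw [Real.norm_eq_abs] at h1
  have h3 := h2.trans h1
  simp only [hφ, one_smul, one_pow, one_mul] at h3
  linarith

end Aux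

noncomputable def myphi (t : ℝ) : ℝ := t * Real.sqrt t

lemma myphi_nonneg {t : ℝ} (h : 0 ≤ t) : 0 ≤ myphi t :=
  mul_nonneg h (Real.sqrt_nonneg t)

lemma myphi_mono {a b : ℝ} (ha : 0 ≤ a) (h : a ≤ b) : myphi a ≤ myphi b :=
  mul_le_mul h (Real.sqrt_le_sqrt h) (Real.sqrt_nonneg a) (ha.trans h)

lemma myphi_mul {a b : ℝ} (ha : 0 ≤ a) : myphi (a * b) = myphi a * myphi b := by
  unfold myphi
  rw [Real.sqrt_mul ha]
  ring

lemma myphi_sq {u : ℝ} (hu : 0 ≤ u) : myphi (u ^ 2) = u ^ 3 := by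
  unfold myphi
  rw [Real.sqrt_sq hu]
  ring

lemma myphi_two_le : myphi 2 ≤ 3 := by
  unfold myphi
  nlinarith [Real.sq_sqrt (by norm_num : (0:ℝ) ≤ 2), Real.sqrt_nonneg 2]

lemma myphi_add {a b : ℝ} (ha : 0 ≤ a) (hb : 0 ≤ b) :
    myphi (a + b) ≤ 3 * (myphi a + myphi b) := by
  rcases le_total a b with h | h
  · have h1 : myphi (a + b) ≤ myphi (2 * b) := myphi_mono (by linarith) (by linarith)
    rw [myphi_mul (by norm_num : (0:ℝ) ≤ 2)] at h1
    have h2 : 0 ≤ myphi b := myphi_nonneg hb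
    have h3 : 0 ≤ myphi a := myphi_nonneg ha
    nlinarith [myphi_two_le]
  · have h1 : myphi (a + b) ≤ myphi (2 * a) := myphi_mono (by linarith) (by linarith)
    rw [myphi_mul (by norm_num : (0:ℝ) ≤ 2)] at h1
    have h2 : 0 ≤ myphi b := myphi_nonneg hb
    have h3 : 0 ≤ myphi a := myphi_nonneg ha
    nlinarith [myphi_two_le]

lemma my_sqrt_mul_le {p q : ℝ} (hp : 0 ≤ p) (hq : 0 ≤ q) :
    Real.sqrt (p * q) ≤ (p + q) / 2 := by
  rw [Real.sqrt_le_left (by positivity)]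
  nlinarith [sq_nonneg (p - q)]

lemma myphi_cube {D u : ℝ} (hD : 0 ≤ D) (hu : 0 ≤ u) :
    myphi (D * u) ≤ (D ^ 3 + u ^ 3) / 2 := by
  have h1 : Real.sqrt (D ^ 3 * u ^ 3) = myphi (D * u) := by
    rw [show D ^ 3 * u ^ 3 = (D * u) ^ 2 * (D * u) by ring,
      Real.sqrt_mul (by positivity), Real.sqrt_sq (by positivity)]
    rfl
  rw [← h1]
  exact my_sqrt_mul_le (by positivity) (by positivity)

lemma my_sum_range_add (F : ℕ → ℝ) (a N : ℕ) :
    ∑ i ∈ Finset.range (a + N), F i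
      = ∑ i ∈ Finset.range a, F i + ∑ i ∈ Finset.range N, F (a + i) := by
  induction N with
  | zero => simp
  | succ N ih =>
      rw [show a + (N + 1) = (a + N) + 1 from rfl, Finset.sum_range_succ, ih,
        Finset.sum_range_succ]
      ring

lemma my_sum_Icc_shift (F : ℕ → ℝ) (k : ℕ) :
    ∑ j ∈ Finset.Icc 1 (k + 1), F j = ∑ i ∈ Finset.range (k + 1), F (i + 1) := by
  induction k with
  | zero => simp
  | succ k ih =>
      rw [Finset.sum_Icc_succ_top (by omega), ih]
      conv_rhs => rw [Finset.sum_range_succ]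

set_option maxHeartbeats 2000000 in
/-- Gradient-norm complexity for the `p = 2` inexact adaptive regularization framework. -/
theorem stmt_17 (n m : ℕ) (hn : 1 ≤ n) (hm : 1 ≤ m)
    (f : EuclideanSpace ℝ (Fin n) → ℝ)
    (hf : ContDiff ℝ (2 : ℕ∞) f)
    (H : EuclideanSpace ℝ (Fin n) → (EuclideanSpace ℝ (Fin n) →L[ℝ] EuclideanSpace ℝ (Fin n)))
    (hH : ∀ (x u v : EuclideanSpace ℝ (Fin n)), ⟪H x u, v⟫_ℝ = iteratedFDeriv ℝ 2 f x ![u, v])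
    (hHsa : ∀ x, IsSelfAdjoint (H x))
    (f_low : ℝ) (hflow : ∀ x, f_low ≤ f x)
    (L : ℝ) (hL : 3 ≤ L)
    (hLip : ∀ x y, ‖H x - H y‖ ≤ L * ‖x - y‖)
    (σ₀ θ₁ θ₂ κD : ℝ) (hσ₀ : 0 < σ₀) (hθ₁ : 1 < θ₁) (hθ₂ : 1 < θ₂) (hκD : 0 ≤ κD)
    (x s : ℕ → EuclideanSpace ℝ (Fin n))
    (B : ℕ → (EuclideanSpace ℝ (Fin n) →L[ℝ] EuclideanSpace ℝ (Fin n)))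
    (hBsa : ∀ k, IsSelfAdjoint (B k))
    (σ : ℕ → ℝ) (hσ0 : σ 0 = σ₀)
    (hx : ∀ k, x (k + 1) = x k + s k)
    (hσrec : ∀ k, σ (k + 1) = σ k + σ k * ‖s k‖ ^ 3)
    (ξ : ℕ → ℝ)
    (hξ : ∀ k, ξ k = ∑ i ∈ Finset.Icc 1 (2 * m - 1),
      if i ≤ k then ‖s (k - i)‖ ^ 3 else 1)
    (chi : (EuclideanSpace ℝ (Fin n) →L[ℝ] EuclideanSpace ℝ (Fin n)) → ℝ)
    (hchi : ∀ A, chi A =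
      sSup {r : ℝ | ∃ d : EuclideanSpace ℝ (Fin n), ‖d‖ = 1 ∧ r = max 0 (-⟪A d, d⟫_ℝ)})
    (ha : ∀ k, ‖B k - H (x k)‖ ^ 3 ≤ κD * ξ k)
    (hb : ∀ k, ⟪gradient f (x k), s k⟫_ℝ + (1 / 2) * ⟪B k (s k), s k⟫_ℝ
        + (σ k / 6) * ‖s k‖ ^ 3 ≤ 0)
    (hc : ∀ k, ‖gradient f (x k) + B k (s k)‖ ≤ (θ₁ * σ k / 2) * ‖s k‖ ^ 2)
    (hd : ∀ k, chi (B k) ≤ θ₂ * σ k * ‖s k‖) :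
    ∃ C : ℝ, 0 < C ∧ ∀ k : ℕ,
      (Finset.Icc 1 (k + 1)).inf' (Finset.nonempty_Icc.mpr (Nat.le_add_left 1 k))
          (fun j => ‖gradient f (x j)‖) ≤
        C * ((k : ℝ) + 1) ^ (-(2 : ℝ) / 3) := by
  have hgrad : ∀ y, HasFDerivAt (gradient f) (H y) y := my_grad_hasFDerivAt hf hH
  have hsn : ∀ k : ℕ, (0:ℝ) ≤ ‖s k‖ ^ 3 := fun k => by positivity
  have hξ0 : ∀ k, (0:ℝ) ≤ ξ k := by
    intro k
    rw [hξ]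
    apply Finset.sum_nonneg
    intro i _
    split <;> positivity
  have hσpos : ∀ k, 0 < σ k := by
    intro k
    induction k with
    | zero => rw [hσ0]; exact hσ₀
    | succ k ih => rw [hσrec]; nlinarith [hsn k]
  have hσmono : Monotone σ := by
    apply monotone_nat_of_le_succ
    intro k
    rw [hσrec]
    nlinarith [hσpos k, hsn k]
  have hσlb : ∀ k, σ₀ ≤ σ k := fun k => by
    rw [← hσ0]; exact hσmono (Nat.zero_le k)
  -- per-step decrease
  have hdec : ∀ k, f (x (k + 1))
      ≤ f (x k) + (L + 2 - σ k) / 6 * ‖s k‖ ^ 3 + κD / 6 * ξ k := by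
    intro k
    have ht := my_fun_taylor hf hgrad hLip (x k) (s k)
    rw [← hx k] at ht
    have hsplit : ⟪H (x k) (s k), s k⟫_ℝ
        = ⟪B k (s k), s k⟫_ℝ - ⟪(B k - H (x k)) (s k), s k⟫_ℝ := by
      simp only [ContinuousLinearMap.sub_apply, inner_sub_left]
      ring
    have h1 : |⟪(B k - H (x k)) (s k), s k⟫_ℝ|
        ≤ ‖B k - H (x k)‖ * ‖s k‖ * ‖s k‖ := by
      calc |⟪(B k - H (x k)) (s k), s k⟫_ℝ|
          ≤ ‖(B k - H (x k)) (s k)‖ * ‖s k‖ := abs_real_inner_le_norm _ _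
        _ ≤ ‖B k - H (x k)‖ * ‖s k‖ * ‖s k‖ :=
            mul_le_mul_of_nonneg_right (ContinuousLinearMap.le_opNorm _ _) (norm_nonneg _)
    have hAM : ‖B k - H (x k)‖ * ‖s k‖ * ‖s k‖ ≤ (κD * ξ k + 2 * ‖s k‖ ^ 3) / 3 := by
      have h3 := ha k
      nlinarith [norm_nonneg (B k - H (x k)), norm_nonneg (s k),
        mul_nonneg (sq_nonneg (‖B k - H (x k)‖ - ‖s k‖))
          (by positivity : (0:ℝ) ≤ ‖B k - H (x k)‖ + 2 * ‖s k‖)]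
    have hbk := hb k
    have h4 : -⟪(B k - H (x k)) (s k), s k⟫_ℝ ≤ (κD * ξ k + 2 * ‖s k‖ ^ 3) / 3 :=
      (neg_le_abs _).trans (h1.trans hAM)
    rw [hsplit] at ht
    linarith
  -- telescoped decrease
  have htel : ∀ a N, f (x (a + N)) ≤ f (x a)
      + ∑ k ∈ Finset.range N,
          ((L + 2 - σ (a + k)) / 6 * ‖s (a + k)‖ ^ 3 + κD / 6 * ξ (a + k)) := by
    intro a N
    induction N with
    | zero => simp
    | succ N ih =>
        rw [show a + (N + 1) = (a + N) + 1 from rfl, Finset.sum_range_succ]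
        have := hdec (a + N)
        linarith
  -- sigma telescoping
  have hσsum : ∀ K, σ K = σ 0 + ∑ k ∈ Finset.range K, σ k * ‖s k‖ ^ 3 := by
    intro K
    induction K with
    | zero => simp
    | succ K ih => rw [hσrec, Finset.sum_range_succ, ih]; ring
  -- xi sum bound
  have hcast : ((2 * m - 1 : ℕ) : ℝ) ≤ 2 * (m : ℝ) := by
    have h := Nat.cast_le (α := ℝ).mpr (show 2 * m - 1 ≤ 2 * m by omega)
    push_cast at h
    linarith
  have hξsumbound : ∀ K, ∑ k ∈ Finset.range K, ξ k
      ≤ (2 * (m:ℝ)) ^ 2 + 2 * (m:ℝ) * ∑ j ∈ Finset.range K, ‖s j‖ ^ 3 := by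
    intro K
    have h1 : ∑ k ∈ Finset.range K, ξ k
        = ∑ i ∈ Finset.Icc 1 (2 * m - 1), ∑ k ∈ Finset.range K,
            (if i ≤ k then ‖s (k - i)‖ ^ 3 else 1) := by
      simp only [hξ]
      exact Finset.sum_comm
    have h2 : ∀ i ∈ Finset.Icc 1 (2 * m - 1),
        ∑ k ∈ Finset.range K, (if i ≤ k then ‖s (k - i)‖ ^ 3 else (1:ℝ))
          ≤ 2 * (m:ℝ) + ∑ j ∈ Finset.range K, ‖s j‖ ^ 3 := by
      intro i hi
      obtain ⟨hi1, hi2⟩ := Finset.mem_Icc.mp hi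
      have hsp : ∀ k, (if i ≤ k then ‖s (k - i)‖ ^ 3 else (1:ℝ))
          = (if i ≤ k then ‖s (k - i)‖ ^ 3 else 0) + (if i ≤ k then 0 else 1) := by
        intro k
        split <;> simp
      rw [Finset.sum_congr rfl (fun k _ => hsp k), Finset.sum_add_distrib]
      have hA : ∑ k ∈ Finset.range K, (if i ≤ k then ‖s (k - i)‖ ^ 3 else (0:ℝ))
          ≤ ∑ j ∈ Finset.range K, ‖s j‖ ^ 3 := by
        rw [← Finset.sum_filter]
        have hinj : ∀ k1 ∈ (Finset.range K).filter (fun k => i ≤ k),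
            ∀ k2 ∈ (Finset.range K).filter (fun k => i ≤ k),
              k1 - i = k2 - i → k1 = k2 := by
          intro k1 h1' k2 h2' h3'
          have e1 := (Finset.mem_filter.mp h1').2
          have e2 := (Finset.mem_filter.mp h2').2
          omega
        have himg := Finset.sum_image (s := (Finset.range K).filter (fun k => i ≤ k))
          (f := fun j => ‖s j‖ ^ 3) (g := fun k => k - i) hinj
        rw [← himg]
        apply Finset.sum_le_sum_of_subset_of_nonneg
        · intro j hj
          obtain ⟨k', hk', he⟩ := Finset.mem_image.mp hj
          have := Finset.mem_filter.mp hk'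
          have := Finset.mem_range.mp this.1
          rw [Finset.mem_range]
          omega
        · intro j _ _
          positivity
      have hB : ∑ k ∈ Finset.range K, (if i ≤ k then (0:ℝ) else 1) ≤ 2 * (m:ℝ) := by
        have e1 : ∀ k, (if i ≤ k then (0:ℝ) else 1)
            = (if k ∈ Finset.range i then (1:ℝ) else 0) := by
          intro k
          rcases le_or_gt i k with h | h
          · rw [if_pos h, if_neg (by simp only [Finset.mem_range]; omega)]
          · rw [if_neg (by omega), if_pos (by simp only [Finset.mem_range]; omega)]
        rw [Finset.sum_congr rfl (fun k _ => e1 k), Finset.sum_ite_mem, Finset.sum_const,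
          nsmul_eq_mul, mul_one]
        have hcard : (Finset.range K ∩ Finset.range i).card ≤ i :=
          le_trans (Finset.card_le_card Finset.inter_subset_right) (by simp)
        calc ((Finset.range K ∩ Finset.range i).card : ℝ)
            ≤ (i : ℝ) := Nat.cast_le.mpr hcard
          _ ≤ ((2 * m - 1 : ℕ) : ℝ) := Nat.cast_le.mpr hi2
          _ ≤ 2 * (m:ℝ) := hcast
      linarith
    rw [h1]
    calc ∑ i ∈ Finset.Icc 1 (2 * m - 1), ∑ k ∈ Finset.range K,
            (if i ≤ k then ‖s (k - i)‖ ^ 3 else (1:ℝ))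
        ≤ ∑ i ∈ Finset.Icc 1 (2 * m - 1),
            (2 * (m:ℝ) + ∑ j ∈ Finset.range K, ‖s j‖ ^ 3) := Finset.sum_le_sum h2
      _ = ((2 * m - 1 : ℕ) : ℝ) * (2 * (m:ℝ) + ∑ j ∈ Finset.range K, ‖s j‖ ^ 3) := by
          rw [Finset.sum_const, Nat.card_Icc, Nat.add_sub_cancel, nsmul_eq_mul]
      _ ≤ (2 * (m:ℝ)) ^ 2 + 2 * (m:ℝ) * ∑ j ∈ Finset.range K, ‖s j‖ ^ 3 := by
          have hS : (0:ℝ) ≤ ∑ j ∈ Finset.range K, ‖s j‖ ^ 3 :=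
            Finset.sum_nonneg (fun j _ => hsn j)
          have h0 : (0:ℝ) ≤ ((2 * m - 1 : ℕ) : ℝ) := Nat.cast_nonneg _
          nlinarith
  have hS0 : ∀ K, (0:ℝ) ≤ ∑ j ∈ Finset.range K, ‖s j‖ ^ 3 :=
    fun K => Finset.sum_nonneg (fun j _ => hsn j)
  -- total step bound
  have htotal : ∃ W : ℝ, 0 ≤ W ∧ ∀ K, ∑ j ∈ Finset.range K, ‖s j‖ ^ 3 ≤ W := by
    set τ : ℝ := L + 8 + κD * (2 * (m:ℝ)) with hτdef
    have hτpos : 0 < τ := by nlinarith [mul_nonneg hκD (by positivity : (0:ℝ) ≤ 2 * (m:ℝ))]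
    by_cases hcase : ∀ k, σ k ≤ τ
    · refine ⟨τ / σ₀, by positivity, fun K => ?_⟩
      have h1 : σ₀ * ∑ j ∈ Finset.range K, ‖s j‖ ^ 3
          ≤ ∑ j ∈ Finset.range K, σ j * ‖s j‖ ^ 3 := by
        rw [Finset.mul_sum]
        exact Finset.sum_le_sum (fun j _ => mul_le_mul_of_nonneg_right (hσlb j) (hsn j))
      have h2 := hσsum K
      have h3 := hcase K
      have h4 : σ 0 = σ₀ := hσ0
      rw [le_div_iff₀ hσ₀]
      have h5 : (∑ j ∈ Finset.range K, ‖s j‖ ^ 3) * σ₀ = σ₀ * ∑ j ∈ Finset.range K, ‖s j‖ ^ 3 :=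
        mul_comm _ _
      rw [h5]
      linarith [h1, hσ₀]
    · push_neg at hcase
      obtain ⟨k₀, hk₀⟩ := hcase
      set P : ℝ := ∑ j ∈ Finset.range k₀, ‖s j‖ ^ 3 with hPdef
      have hP0 : 0 ≤ P := hS0 k₀
      set Q : ℝ := f (x k₀) - f_low + κD / 6 * ((2 * (m:ℝ)) ^ 2 + 2 * (m:ℝ) * P) with hQdef
      have hT : ∀ N, ∑ k ∈ Finset.range N, ‖s (k₀ + k)‖ ^ 3 ≤ Q := by
        intro N
        set T : ℝ := ∑ k ∈ Finset.range N, ‖s (k₀ + k)‖ ^ 3 with hTdef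
        have hT0 : 0 ≤ T := Finset.sum_nonneg (fun j _ => hsn _)
        have h1 := htel k₀ N
        have h2 : ∑ k ∈ Finset.range N,
            ((L + 2 - σ (k₀ + k)) / 6 * ‖s (k₀ + k)‖ ^ 3 + κD / 6 * ξ (k₀ + k))
            ≤ (L + 2 - τ) / 6 * T + κD / 6 * ∑ k ∈ Finset.range N, ξ (k₀ + k) := by
          rw [hTdef, Finset.mul_sum, Finset.mul_sum, ← Finset.sum_add_distrib]
          apply Finset.sum_le_sum
          intro k _
          have hσk : τ ≤ σ (k₀ + k) := le_trans hk₀.le (hσmono (Nat.le_add_right _ _))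
          have := hsn (k₀ + k)
          nlinarith
        have h3 : ∑ k ∈ Finset.range N, ξ (k₀ + k) ≤ ∑ j ∈ Finset.range (k₀ + N), ξ j := by
          rw [my_sum_range_add ξ k₀ N]
          have : (0:ℝ) ≤ ∑ j ∈ Finset.range k₀, ξ j :=
            Finset.sum_nonneg (fun j _ => hξ0 j)
          linarith
        have h4 := hξsumbound (k₀ + N)
        have h5 : ∑ j ∈ Finset.range (k₀ + N), ‖s j‖ ^ 3 = P + T := by
          rw [my_sum_range_add _ k₀ N]
        have h6 := hflow (x (k₀ + N))
        have hmul : κD / 6 * ∑ k ∈ Finset.range N, ξ (k₀ + k)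
            ≤ κD / 6 * ((2 * (m:ℝ)) ^ 2 + 2 * (m:ℝ) * (P + T)) := by
          apply mul_le_mul_of_nonneg_left _ (by positivity)
          rw [← h5]
          exact h3.trans h4
        have hexp : (L + 2 - τ) / 6 * T + κD / 6 * ((2 * (m:ℝ)) ^ 2 + 2 * (m:ℝ) * (P + T))
            = -T + κD / 6 * ((2 * (m:ℝ)) ^ 2 + 2 * (m:ℝ) * P) := by
          rw [hτdef]
          ring
        have hc1 : f_low ≤ f (x k₀)
            + ((L + 2 - τ) / 6 * T + κD / 6 * ∑ k ∈ Finset.range N, ξ (k₀ + k)) := by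
          linarith [h1, h2, h6]
        have hc2 : f_low ≤ f (x k₀)
            + (-T + κD / 6 * ((2 * (m:ℝ)) ^ 2 + 2 * (m:ℝ) * P)) := by
          linarith [hc1, hmul, hexp]
        rw [hQdef]
        linarith [hc2]
      refine ⟨P + max Q 0, by positivity, fun K => ?_⟩
      rcases le_or_gt K k₀ with hK | hK
      · have hsub : Finset.range K ⊆ Finset.range k₀ := by
          intro j hj
          rw [Finset.mem_range] at *
          omega
        have := Finset.sum_le_sum_of_subset_of_nonneg hsub (fun j _ _ => hsn j)
        have hmax : (0:ℝ) ≤ max Q 0 := le_max_right _ _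
        calc ∑ j ∈ Finset.range K, ‖s j‖ ^ 3 ≤ P := this
          _ ≤ P + max Q 0 := by linarith
      · obtain ⟨N, rfl⟩ : ∃ N, K = k₀ + N := ⟨K - k₀, by omega⟩
        rw [my_sum_range_add _ k₀ N]
        have := hT N
        have hmax : Q ≤ max Q 0 := le_max_left _ _
        linarith
  obtain ⟨W, hW0, hWb⟩ := htotal
  -- sigma upper bound
  have hσub : ∀ K, σ K ≤ σ₀ * Real.exp W := by
    have key : ∀ K, σ K ≤ σ₀ * Real.exp (∑ j ∈ Finset.range K, ‖s j‖ ^ 3) := by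
      intro K
      induction K with
      | zero => simp [hσ0]
      | succ K ih =>
          rw [hσrec, Finset.sum_range_succ, Real.exp_add]
          have h2 : 1 + ‖s K‖ ^ 3 ≤ Real.exp (‖s K‖ ^ 3) := by
            have := Real.add_one_le_exp (‖s K‖ ^ 3)
            linarith
          have h3 : 0 < Real.exp (∑ j ∈ Finset.range K, ‖s j‖ ^ 3) := Real.exp_pos _
          nlinarith [hσpos K, hsn K]
    intro K
    exact (key K).trans (mul_le_mul_of_nonneg_left
      (Real.exp_le_exp.mpr (hWb K)) hσ₀.le)
  set σmax : ℝ := σ₀ * Real.exp W with hσmaxdef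
  have hσmaxpos : 0 < σmax := by positivity
  set a : ℝ := (L + θ₁ * σmax) / 2 with hadef
  have ha0 : 0 ≤ a := by
    rw [hadef]
    nlinarith
  -- gradient step bound
  have hgb : ∀ k, ‖gradient f (x (k + 1))‖
      ≤ a * ‖s k‖ ^ 2 + ‖B k - H (x k)‖ * ‖s k‖ := by
    intro k
    rw [hx k]
    have e : gradient f (x k + s k)
        = (gradient f (x k + s k) - gradient f (x k) - H (x k) (s k))
          + (gradient f (x k) + B k (s k)) + ((H (x k) - B k) (s k)) := by
      simp only [ContinuousLinearMap.sub_apply]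
      abel
    have t1 := my_grad_taylor hgrad hLip (x k) (s k)
    have t2 := hc k
    have t3 : ‖(H (x k) - B k) (s k)‖ ≤ ‖B k - H (x k)‖ * ‖s k‖ := by
      calc ‖(H (x k) - B k) (s k)‖ ≤ ‖H (x k) - B k‖ * ‖s k‖ :=
            ContinuousLinearMap.le_opNorm _ _
        _ = ‖B k - H (x k)‖ * ‖s k‖ := by rw [norm_sub_rev]
    have hσk := hσub k
    have hθ₁0 : (0:ℝ) < θ₁ := by linarith
    have hsumle : ‖gradient f (x k + s k)‖
        ≤ ‖gradient f (x k + s k) - gradient f (x k) - H (x k) (s k)‖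
          + ‖gradient f (x k) + B k (s k)‖ + ‖(H (x k) - B k) (s k)‖ := by
      conv_lhs => rw [e]
      exact (norm_add_le _ _).trans (add_le_add_left (norm_add_le _ _) _)
    have hprod : θ₁ * σ k * ‖s k‖ ^ 2 ≤ θ₁ * σmax * ‖s k‖ ^ 2 :=
      mul_le_mul_of_nonneg_right (mul_le_mul_of_nonneg_left hσk hθ₁0.le) (sq_nonneg _)
    have hfin2 : L / 2 * ‖s k‖ ^ 2 + θ₁ * σ k / 2 * ‖s k‖ ^ 2 + ‖B k - H (x k)‖ * ‖s k‖
        ≤ a * ‖s k‖ ^ 2 + ‖B k - H (x k)‖ * ‖s k‖ := by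
      rw [hadef]
      nlinarith [hprod]
    linarith [hsumle, t1, t2, t3, hfin2]
  -- phi step bound
  have hφstep : ∀ k, myphi ‖gradient f (x (k + 1))‖
      ≤ 3 * (myphi a * ‖s k‖ ^ 3) + 3 / 2 * (κD * ξ k + ‖s k‖ ^ 3) := by
    intro k
    have h1 := myphi_mono (norm_nonneg _) (hgb k)
    have h2 := myphi_add (by positivity : (0:ℝ) ≤ a * ‖s k‖ ^ 2)
      (by positivity : (0:ℝ) ≤ ‖B k - H (x k)‖ * ‖s k‖)
    have h3 : myphi (a * ‖s k‖ ^ 2) = myphi a * ‖s k‖ ^ 3 := by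
      rw [myphi_mul ha0, myphi_sq (norm_nonneg _)]
    have h4 : myphi (‖B k - H (x k)‖ * ‖s k‖)
        ≤ (‖B k - H (x k)‖ ^ 3 + ‖s k‖ ^ 3) / 2 :=
      myphi_cube (norm_nonneg _) (norm_nonneg _)
    have h5 := ha k
    linarith
  -- phi sum bound
  set Cg : ℝ := 3 * (myphi a * W)
      + 3 / 2 * (κD * ((2 * (m:ℝ)) ^ 2 + 2 * (m:ℝ) * W) + W) with hCgdef
  have hCg0 : 0 ≤ Cg := by
    rw [hCgdef]
    have := myphi_nonneg ha0
    positivity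
  have hφsum : ∀ K, ∑ k ∈ Finset.range K, myphi ‖gradient f (x (k + 1))‖ ≤ Cg := by
    intro K
    have h1 : ∑ k ∈ Finset.range K, myphi ‖gradient f (x (k + 1))‖
        ≤ ∑ k ∈ Finset.range K,
            (3 * (myphi a * ‖s k‖ ^ 3) + 3 / 2 * (κD * ξ k + ‖s k‖ ^ 3)) :=
      Finset.sum_le_sum (fun k _ => hφstep k)
    have e1 : ∑ k ∈ Finset.range K,
        (3 * (myphi a * ‖s k‖ ^ 3) + 3 / 2 * (κD * ξ k + ‖s k‖ ^ 3))
        = 3 * myphi a * (∑ k ∈ Finset.range K, ‖s k‖ ^ 3)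
          + 3 / 2 * κD * (∑ k ∈ Finset.range K, ξ k)
          + 3 / 2 * (∑ k ∈ Finset.range K, ‖s k‖ ^ 3) := by
      rw [Finset.mul_sum, Finset.mul_sum, Finset.mul_sum,
        ← Finset.sum_add_distrib, ← Finset.sum_add_distrib]
      exact Finset.sum_congr rfl (fun k _ => by ring)
    have h2 := hξsumbound K
    have h3 := hWb K
    have h5 := myphi_nonneg ha0
    rw [e1] at h1
    rw [hCgdef]
    have p1 : myphi a * (∑ k ∈ Finset.range K, ‖s k‖ ^ 3) ≤ myphi a * W :=
      mul_le_mul_of_nonneg_left h3 h5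
    have p2 : κD * (∑ k ∈ Finset.range K, ξ k)
        ≤ κD * ((2 * (m:ℝ)) ^ 2 + 2 * (m:ℝ) * (∑ k ∈ Finset.range K, ‖s k‖ ^ 3)) :=
      mul_le_mul_of_nonneg_left h2 hκD
    have p3 : κD * (2 * (m:ℝ) * (∑ k ∈ Finset.range K, ‖s k‖ ^ 3))
        ≤ κD * (2 * (m:ℝ) * W) :=
      mul_le_mul_of_nonneg_left
        (mul_le_mul_of_nonneg_left h3 (by positivity)) hκD
    linarith [p1, p2, p3, h1, h3]
  -- conclusion
  set C : ℝ := max 1 (Cg ^ 2) with hCdef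
  have hC1 : (1:ℝ) ≤ C := le_max_left _ _
  refine ⟨C, lt_of_lt_of_le one_pos hC1, fun k => ?_⟩
  set mn : ℝ := (Finset.Icc 1 (k + 1)).inf' (Finset.nonempty_Icc.mpr (Nat.le_add_left 1 k))
      (fun j => ‖gradient f (x j)‖) with hmndef
  have hmn0 : 0 ≤ mn := by
    rw [hmndef]
    exact Finset.le_inf' _ _ (fun j _ => norm_nonneg _)
  have hr : (0:ℝ) < (k:ℝ) + 1 := by positivity
  have hkey : ((k:ℝ) + 1) * myphi mn ≤ Cg := by
    have h1 : ∑ j ∈ Finset.Icc 1 (k + 1), myphi mn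
        ≤ ∑ j ∈ Finset.Icc 1 (k + 1), myphi ‖gradient f (x j)‖ := by
      apply Finset.sum_le_sum
      intro j hj
      exact myphi_mono hmn0 (Finset.inf'_le _ hj)
    rw [Finset.sum_const, Nat.card_Icc] at h1
    simp only [nsmul_eq_mul] at h1
    have h2 : ∑ j ∈ Finset.Icc 1 (k + 1), myphi ‖gradient f (x j)‖
        = ∑ i ∈ Finset.range (k + 1), myphi ‖gradient f (x (i + 1))‖ :=
      my_sum_Icc_shift (fun j => myphi ‖gradient f (x j)‖) k
    have h3 := hφsum (k + 1)
    have h4 : ((k + 1 + 1 - 1 : ℕ) : ℝ) = (k:ℝ) + 1 := by push_cast; ring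
    rw [h4] at h1
    linarith
  have hcube : mn ^ 3 * ((k:ℝ) + 1) ^ 2 ≤ Cg ^ 2 := by
    have h2 : (((k:ℝ) + 1) * myphi mn) ^ 2 ≤ Cg ^ 2 := by
      exact pow_le_pow_left₀ (mul_nonneg hr.le (myphi_nonneg hmn0)) hkey 2
    have h3 : (((k:ℝ) + 1) * myphi mn) ^ 2 = mn ^ 3 * ((k:ℝ) + 1) ^ 2 := by
      unfold myphi
      rw [mul_pow, mul_pow, Real.sq_sqrt hmn0]
      ring
    linarith
  have hfin : mn * ((k:ℝ) + 1) ^ ((2:ℝ)/3) ≤ C := by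
    apply le_of_pow_le_pow_left₀ (n := 3) (by norm_num) (le_trans zero_le_one hC1)
    have e2 : (((k:ℝ) + 1) ^ ((2:ℝ)/3)) ^ (3:ℕ) = ((k:ℝ) + 1) ^ (2:ℕ) := by
      rw [← Real.rpow_natCast (((k:ℝ) + 1) ^ ((2:ℝ)/3)) 3, ← Real.rpow_mul hr.le]
      rw [show (2:ℝ)/3 * ((3:ℕ):ℝ) = ((2:ℕ):ℝ) by push_cast; ring, Real.rpow_natCast]
    rw [mul_pow, e2]
    calc mn ^ 3 * ((k:ℝ) + 1) ^ 2 ≤ Cg ^ 2 := hcube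
      _ ≤ C := le_max_right _ _
      _ ≤ C ^ 3 := by
          nlinarith [mul_nonneg (mul_nonneg (by linarith : (0:ℝ) ≤ C)
            (by linarith : (0:ℝ) ≤ C - 1)) (by linarith : (0:ℝ) ≤ C + 1)]
  have e3 : ((k:ℝ) + 1) ^ (-(2:ℝ)/3) = (((k:ℝ) + 1) ^ ((2:ℝ)/3))⁻¹ := by
    rw [neg_div, Real.rpow_neg hr.le]
  rw [e3, ← div_eq_mul_inv, le_div_iff₀ (Real.rpow_pos_of_pos hr _)]
  exact hfin
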